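/- Let d ≥ 1 and let ρ be a probability measure on ℝ^d. Let M be a d×d symmetric positive semi-definite matrix that is not invertible and let x ∈ ℝ^d. Then I(x, M) ≥ −ln ρ(Ker(M)^⊥), where Ker(M)^⊥ is the orthogonal complement of the kernel of M in ℝ^d. -/

import Mathlib

open MeasureTheory Filter Matrix Real

noncomputable section

/-- `T_n(x) = ∑ i, x_i ᵗx_i`. -/
def Tmat (d n : ℕ) (x : Fin n → Fin d → ℝ) : Matrix (Fin d) (Fin d) ℝ :=
  ∑ i, Matrix.vecMulVec (x i) (x i)

/-- `S_n(x) = x_1 + … + x_n`. -/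
def Svec (d n : ℕ) (x : Fin n → Fin d → ℝ) : Fin d → ℝ := ∑ i, x i

/-- the Hamiltonian `(1/2)⟨T_n⁻¹ S_n, S_n⟩`. -/
def Hfun (d n : ℕ) (x : Fin n → Fin d → ℝ) : ℝ :=
  (1 / 2) * dotProduct ((Tmat d n x)⁻¹.mulVec (Svec d n x)) (Svec d n x)

/-- normalization constant `Z_n`. -/
def Zconst (d : ℕ) (ρ : Measure (Fin d → ℝ)) (n : ℕ) : ℝ :=
  ∫ x : Fin n → Fin d → ℝ,
    Set.indicator {x | 0 < (Tmat d n x).det} (fun x => Real.exp (Hfun d n x)) x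
    ∂ Measure.pi fun _ => ρ

/-- the Curie-Weiss model of SOC `μ̃_{n,ρ}`. -/
def CW (d : ℕ) (ρ : Measure (Fin d → ℝ)) (n : ℕ) : Measure (Fin n → Fin d → ℝ) :=
  (Measure.pi fun _ => ρ).withDensity fun x =>
    Set.indicator {x | 0 < (Tmat d n x).det}
      (fun x => ENNReal.ofReal (Real.exp (Hfun d n x) / Zconst d ρ n)) x

/-- covariance matrix `Σ = ∫ z ᵗz dρ(z)`. -/
def covM (d : ℕ) (ρ : Measure (Fin d → ℝ)) : Matrix (Fin d) (Fin d) ℝ :=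
  Matrix.of fun i j => ∫ z, z i * z j ∂ρ

/-- `M₄(z) = ∑ (∫ yᵢyⱼyₖyₗ dρ) zᵢzⱼzₖzₗ`. -/
def M4 (d : ℕ) (ρ : Measure (Fin d → ℝ)) (z : Fin d → ℝ) : ℝ :=
  ∑ i : Fin d, ∑ j : Fin d, ∑ k : Fin d, ∑ l : Fin d,
    (∫ y, y i * y j * y k * y l ∂ρ) * (z i * z j * z k * z l)

/-- symmetric measure: invariant under `z ↦ -z`. -/
def SymMeas (d : ℕ) (ρ : Measure (Fin d → ℝ)) : Prop := ρ.map (fun z => -z) = ρ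

/-- condition `(*)` : some Gaussian exponential moment. -/
def CondStar (d : ℕ) (ρ : Measure (Fin d → ℝ)) : Prop :=
  ∃ v₀ > (0:ℝ), Integrable (fun z => Real.exp (v₀ * dotProduct z z)) ρ

/-- the ρ-measure of every vector hyperplane is `< 1/√e`. -/
def HypLt (d : ℕ) (ρ : Measure (Fin d → ℝ)) : Prop :=
  ∀ s : Fin d → ℝ, s ≠ 0 →
    ρ {z | dotProduct s z = 0} < ENNReal.ofReal (1 / Real.sqrt (Real.exp 1))

/-- non-degeneracy: the ρ-measure of every affine hyperplane is `< 1`. -/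
def NonDeg (d : ℕ) (ρ : Measure (Fin d → ℝ)) : Prop :=
  ∀ s : Fin d → ℝ, s ≠ 0 → ∀ c : ℝ, ρ {z | dotProduct s z = c} < 1

-- positive square root of a positive semi-definite matrix (junk value otherwise).
open scoped Classical in
def psqrt (d : ℕ) (M : Matrix (Fin d) (Fin d) ℝ) : Matrix (Fin d) (Fin d) ℝ :=
  if h : M.PosSemidef then
    h.1.eigenvectorUnitary.1 * diagonal ((RCLike.ofReal : ℝ → ℝ) ∘ Real.sqrt ∘ h.1.eigenvalues) *
      (star h.1.eigenvectorUnitary : Matrix (Fin d) (Fin d) ℝ)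
  else 0

/-- Euclidean norm on `ℝ^d`. -/
def vnorm (d : ℕ) (v : Fin d → ℝ) : ℝ := Real.sqrt (dotProduct v v)

/-- Frobenius norm on `d × d` matrices. -/
def mnorm (d : ℕ) (M : Matrix (Fin d) (Fin d) ℝ) : ℝ :=
  Real.sqrt (∑ i : Fin d, ∑ j : Fin d, (M i j) ^ 2)

/-- the log-Laplace transform `Λ` of `(Z, Z ᵗZ)`, with values in `(-∞, +∞]`. -/
def Lam (d : ℕ) (ρ : Measure (Fin d → ℝ)) (u : Fin d → ℝ)
    (A : Matrix (Fin d) (Fin d) ℝ) : EReal :=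
  ENNReal.log (∫⁻ z, ENNReal.ofReal
    (Real.exp (dotProduct u z + dotProduct (A.mulVec z) z)) ∂ρ)

/-- the Cramér transform `I` of `(Z, Z ᵗZ)`. -/
def CramerI (d : ℕ) (ρ : Measure (Fin d → ℝ)) (x : Fin d → ℝ)
    (M : Matrix (Fin d) (Fin d) ℝ) : EReal :=
  ⨆ p : (Fin d → ℝ) × {A : Matrix (Fin d) (Fin d) ℝ // A.IsSymm},
    ((dotProduct x p.1 + (M * (p.2 : Matrix (Fin d) (Fin d) ℝ)).trace : ℝ) : EReal)
      - Lam d ρ p.1 p.2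

end

open Topology

/-- if `M` is positive semi-definite and not invertible then
`I(x,M) ≥ -ln ρ(Ker(M)^⊥)`. -/
theorem cramerI_ge_neg_log_kernel_perp
    (d : ℕ) (hd : 1 ≤ d) (ρ : Measure (Fin d → ℝ)) [IsProbabilityMeasure ρ]
    (M : Matrix (Fin d) (Fin d) ℝ) (hM : M.PosSemidef) (hMni : ¬ IsUnit M)
    (x : Fin d → ℝ) :
    -(ENNReal.log (ρ {z | ∀ y : Fin d → ℝ, M.mulVec y = 0 → dotProduct y z = 0}))
      ≤ CramerI d ρ x M := by
    classical
  have hH : M.IsHermitian := hM.1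
  set U : Matrix (Fin d) (Fin d) ℝ := (hH.eigenvectorUnitary : Matrix (Fin d) (Fin d) ℝ) with hU
  set lam : Fin d → ℝ := hH.eigenvalues with hlam
  set e : Fin d → ℝ := fun i => if lam i = 0 then (1:ℝ) else 0 with he
  set E : Matrix (Fin d) (Fin d) ℝ := Matrix.diagonal e with hE
  set N : Matrix (Fin d) (Fin d) ℝ := U * E * star U with hN
  have hUU : star U * U = 1 := (Matrix.mem_unitaryGroup_iff').mp hH.eigenvectorUnitary.2
  have hUU' : U * star U = 1 := (Matrix.mem_unitaryGroup_iff).mp hH.eigenvectorUnitary.2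
  have hofReal : (RCLike.ofReal ∘ lam : Fin d → ℝ) = lam := by funext i; simp [RCLike.ofReal]
  have hspec : M = U * Matrix.diagonal lam * star U := by
    have := hH.spectral_theorem
    rwa [hofReal] at this
  -- M * N = 0
  have hMN : M * N = 0 := by
    rw [hspec, hN]
    have : U * Matrix.diagonal lam * star U * (U * E * star U)
        = U * (Matrix.diagonal lam * (star U * U) * E) * star U := by noncomm_ring
    rw [this, hUU, mul_one, hE, Matrix.diagonal_mul_diagonal]
    have h0 : (fun i => lam i * e i) = fun _ => (0:ℝ) := by
      funext i; by_cases h : lam i = 0 <;> simp [he, h]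
    rw [h0, Matrix.diagonal_zero, mul_zero, zero_mul]
  -- N is symmetric
  have hNsymm : N.IsSymm := by
    rw [hN, Matrix.IsSymm]
    have h1 : star U = U.transpose := rfl
    rw [Matrix.transpose_mul, Matrix.transpose_mul, h1, Matrix.transpose_transpose, hE,
      Matrix.diagonal_transpose, ← mul_assoc]
  -- the quadratic form
  set q : (Fin d → ℝ) → ℝ := fun z => dotProduct (N.mulVec z) z with hq
  have hqw : ∀ z, q z = ∑ i, e i * (Matrix.mulVec (star U) z i)^2 := by
    intro z
    rw [hq]
    simp only [hN, ← Matrix.mulVec_mulVec]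
    rw [dotProduct_comm, Matrix.dotProduct_mulVec]
    have h1 : z ᵥ* U = Matrix.mulVec (star U) z := by
      rw [show star U = U.transpose from rfl, Matrix.mulVec_transpose]
    rw [h1, hE]
    simp [dotProduct, Matrix.mulVec_diagonal]
    exact Finset.sum_congr rfl fun i _ => by ring
  have hq0 : ∀ z, 0 ≤ q z := by
    intro z; rw [hqw]
    apply Finset.sum_nonneg
    intro i _
    by_cases h : lam i = 0 <;> simp [he, h] <;> positivity
  -- the inclusion {q = 0} ⊆ K
  have hincl : {z | q z = 0} ⊆
      {z | ∀ y : Fin d → ℝ, M.mulVec y = 0 → dotProduct y z = 0} := by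
    intro z hz y hy
    set w : Fin d → ℝ := Matrix.mulVec (star U) z with hw
    set v : Fin d → ℝ := Matrix.mulVec (star U) y with hv
    have hwz : ∀ i, lam i = 0 → w i = 0 := by
      intro i hi
      have hsum : ∑ j, e j * (w j)^2 = 0 := by rw [← hqw z]; exact hz
      have hterm : ∀ j ∈ Finset.univ, (0:ℝ) ≤ e j * (w j)^2 := by
        intro j _; by_cases h : lam j = 0 <;> simp [he, h] <;> positivity
      have := (Finset.sum_eq_zero_iff_of_nonneg hterm).mp hsum i (Finset.mem_univ i)
      simpa [he, hi] using this
    have hvz : ∀ i, lam i ≠ 0 → v i = 0 := by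
      intro i hi
      have h1 : Matrix.mulVec (Matrix.diagonal lam) v = 0 := by
        have h2 : Matrix.mulVec M y = Matrix.mulVec U (Matrix.mulVec (Matrix.diagonal lam) v) := by
          rw [hspec, hv]; simp [Matrix.mulVec_mulVec, mul_assoc]
        have h3 : Matrix.mulVec U (Matrix.mulVec (Matrix.diagonal lam) v) = 0 := by
          rw [← h2, hy]
        have h4 := congrArg (Matrix.mulVec (star U)) h3
        rwa [Matrix.mulVec_mulVec, hUU, Matrix.one_mulVec, Matrix.mulVec_zero] at h4
      have h5 : lam i * v i = 0 := by
        have := congrFun h1 i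
        simpa [Matrix.mulVec_diagonal] using this
      exact (mul_eq_zero.mp h5).resolve_left hi
    have hy' : y = Matrix.mulVec U v := by
      rw [hv, Matrix.mulVec_mulVec, hUU', Matrix.one_mulVec]
    rw [hy', dotProduct_comm, Matrix.dotProduct_mulVec]
    have h6 : z ᵥ* U = w := by
      rw [hw, show star U = U.transpose from rfl, Matrix.mulVec_transpose]
    rw [h6, dotProduct]
    apply Finset.sum_eq_zero
    intro i _
    by_cases h : lam i = 0
    · rw [hwz i h, zero_mul]
    · rw [hvz i h, mul_zero]
  -- measurability of q
  have hqm : Measurable q := by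
    rw [hq]
    simp only [dotProduct, Matrix.mulVec]
    apply Finset.measurable_sum
    intro i _
    apply Measurable.mul _ (measurable_pi_apply i)
    apply Finset.measurable_sum
    intro j _
    exact (measurable_pi_apply j).const_mul _
  -- the sequence of integrals
  set g : ℕ → ENNReal := fun n => ∫⁻ z, ENNReal.ofReal (Real.exp (-(n:ℝ) * q z)) ∂ρ with hg
  -- Step A : each -log (g n) is below CramerI
  have hA : ∀ n : ℕ, -(ENNReal.log (g n)) ≤ CramerI d ρ x M := by
    intro n
    have hterm : ((dotProduct x (0 : Fin d → ℝ)
        + (M * ((-(n:ℝ)) • N)).trace : ℝ) : EReal)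
        - Lam d ρ 0 ((-(n:ℝ)) • N) = -(ENNReal.log (g n)) := by
      have h1 : dotProduct x (0 : Fin d → ℝ) = 0 := dotProduct_zero x
      have h2 : M * ((-(n:ℝ)) • N) = 0 := by rw [Matrix.mul_smul, hMN, smul_zero]
      have h3 : Lam d ρ 0 ((-(n:ℝ)) • N) = ENNReal.log (g n) := by
        rw [Lam, hg]
        congr 1
        apply lintegral_congr
        intro z
        congr 2
        rw [zero_dotProduct, zero_add, Matrix.smul_mulVec,
          smul_dotProduct, smul_eq_mul, hq]
      rw [h1, h2, Matrix.trace_zero, h3, add_zero, EReal.coe_zero, zero_sub]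
    rw [CramerI, ← hterm]
    exact le_iSup (fun p : (Fin d → ℝ) × {A : Matrix (Fin d) (Fin d) ℝ // A.IsSymm} =>
      ((dotProduct x p.1 + (M * (p.2 : Matrix (Fin d) (Fin d) ℝ)).trace : ℝ) : EReal)
        - Lam d ρ p.1 p.2)
      (⟨0, ⟨(-(n:ℝ)) • N, hNsymm.smul _⟩⟩)
  -- Step B : g n → ρ {q = 0}
  have hmeasset : MeasurableSet {z | q z = 0} := by
    have : {z | q z = 0} = q ⁻¹' {0} := rfl
    rw [this]; exact hqm (measurableSet_singleton 0)
  have hB : Tendsto g atTop (𝓝 (ρ {z | q z = 0})) := by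
    have key : Tendsto g atTop
        (𝓝 (∫⁻ z, Set.indicator {z | q z = 0} (1 : (Fin d → ℝ) → ENNReal) z ∂ρ)) := by
      apply tendsto_lintegral_of_dominated_convergence (fun _ => (1:ENNReal))
      · intro n
        exact ENNReal.measurable_ofReal.comp (Real.measurable_exp.comp (hqm.const_mul _))
      · intro n
        apply ae_of_all
        intro z
        have hle : -(n:ℝ) * q z ≤ 0 :=
          mul_nonpos_of_nonpos_of_nonneg (neg_nonpos.mpr (Nat.cast_nonneg n)) (hq0 z)
        calc ENNReal.ofReal (Real.exp (-(n:ℝ) * q z))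
            ≤ ENNReal.ofReal (Real.exp 0) := by
              apply ENNReal.ofReal_le_ofReal
              exact Real.exp_le_exp.mpr hle
          _ = 1 := by simp
      · simp
      · apply ae_of_all
        intro z
        by_cases h : q z = 0
        · have hz : z ∈ {z | q z = 0} := h
          rw [Set.indicator_of_mem hz]
          simp only [h, mul_zero, Real.exp_zero, ENNReal.ofReal_one, Pi.one_apply]
          exact tendsto_const_nhds
        · have hz : z ∉ {z | q z = 0} := h
          rw [Set.indicator_of_notMem hz]
          have hpos : 0 < q z := lt_of_le_of_ne (hq0 z) (Ne.symm h)
          have h1 : Tendsto (fun n : ℕ => -(n:ℝ) * q z) atTop atBot := by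
            have h2 : Tendsto (fun n : ℕ => (n:ℝ) * q z) atTop atTop :=
              (tendsto_natCast_atTop_atTop).atTop_mul_const hpos
            simpa [Function.comp_def, neg_mul] using tendsto_neg_atTop_atBot.comp h2
          have h3 : Tendsto (fun n : ℕ => Real.exp (-(n:ℝ) * q z)) atTop (𝓝 0) :=
            Real.tendsto_exp_atBot.comp h1
          have h4 := ENNReal.tendsto_ofReal h3
          simpa using h4
    rwa [lintegral_indicator_one hmeasset] at key
  -- Step C : conclude
  have hmono : ρ {z | q z = 0}
      ≤ ρ {z | ∀ y : Fin d → ℝ, M.mulVec y = 0 → dotProduct y z = 0} :=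
    measure_mono hincl
  have hlogt : Tendsto (fun n => ENNReal.log (g n)) atTop
      (𝓝 (ENNReal.log (ρ {z | q z = 0}))) :=
    (ENNReal.continuous_log.tendsto _).comp hB
  have hge : -(CramerI d ρ x M) ≤ ENNReal.log (ρ {z | q z = 0}) := by
    apply ge_of_tendsto' hlogt
    intro n
    exact EReal.neg_le.mp (hA n)
  apply EReal.neg_le.mpr
  exact le_trans hge (ENNReal.log_monotone hmono)
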